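/- Hamilton–Jacobi theorem for locally conformal Hamilton–De Donder–Weyl equations (coordinate form). Let ϑ = ϑ_i(x)dx^i be a closed 1-form on ℝ^m and let ρ(x,u), γ^i_α(x,u) be smooth functions such that the m-form γ̄ = ρ d_mx + γ^i_α du^α∧(∂_i⌟d_mx) on E is closed (∂ρ/∂u^α = Σ_i ∂γ^i_α/∂x^i and ∂γ^i_α/∂u^β = ∂γ^i_β/∂u^α). Assume the induced connection h^γ is flat, i.e. through every point (x₀,u₀) ∈ E there passes an integral section σ of h^γ with σ(x₀) = u₀. Then the following are equivalent: (1) for every integral section σ of h^γ, the map x ↦ (x, σ(x), γ^i_α(x,σ(x))) satisfies the locally conformal Hamilton–De Donder–Weyl equations ∂σ^α/∂x^i = (∂H/∂p^i_α)∘(γ∘σ) and Σ_i ∂/∂x^i[γ^i_α(x,σ(x))] = −(∂H/∂u^α)∘(γ∘σ) + ϑ_i γ^i_α(x,σ(x)); (2) the m-form h∘γ on E is closed with respect to the Lichnerowicz differential, d_ϑ(h∘γ) = 0, which (given the symmetry of ∂γ^i_α/∂u^β) amounts to Σ_i ∂γ^i_α/∂x^i + (∂H/∂u^α)(x,u,γ(x,u))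 + (∂H/∂p^i_β)(x,u,γ(x,u))·∂γ^i_β/∂u^α − ϑ_i γ^i_α = 0 for all (x,u). -/

import Mathlib

open scoped BigOperators

noncomputable section

/-- `J¹π* = ℝ^m × ℝ^N × ℝ^{mN}` in coordinates `(xⁱ, u^α, pⁱ_α)`. -/
abbrev Jb (m N : ℕ) : Type := (Fin m → ℝ) × (Fin N → ℝ) × (Fin m → Fin N → ℝ)

/-- The coordinate vector `∂/∂u^α` on `J¹π*`. -/
def UdirJ (m N : ℕ) (α : Fin N) : Jb m N := (0, Pi.single α 1, 0)

/-- The coordinate vector `∂/∂pⁱ_α` on `J¹π*`. -/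
def PdirJ (m N : ℕ) (i : Fin m) (α : Fin N) : Jb m N := (0, 0, Pi.single i (Pi.single α 1))

/-- The point `γ(x,u) = (x, u, γⁱ_α(x,u))` of `J¹π*` over `(x,u) ∈ E`. -/
def gSec (m N : ℕ) (γ : (Fin m → ℝ) × (Fin N → ℝ) → Fin m → Fin N → ℝ)
    (e : (Fin m → ℝ) × (Fin N → ℝ)) : Jb m N := (e.1, e.2, γ e)

/-- `σ : ℝ^m → ℝ^N` is an integral section of the connection `h^γ` induced by the section
`γ` of `J¹π* → E`: `∂σ^α/∂xⁱ(x) = (∂H/∂pⁱ_α)(x, σ(x), γ(x,σ(x)))`. -/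
def IsIntegralSec (m N : ℕ) (H : Jb m N → ℝ)
    (γ : (Fin m → ℝ) × (Fin N → ℝ) → Fin m → Fin N → ℝ)
    (σ : (Fin m → ℝ) → Fin N → ℝ) : Prop :=
  ∀ (x : Fin m → ℝ) (i : Fin m) (α : Fin N),
    fderiv ℝ σ x (Pi.single i 1) α = fderiv ℝ H (gSec m N γ (x, σ x)) (PdirJ m N i α)


section aux
variable {m N : ℕ}

def evE (i : Fin m) (α : Fin N) : (Fin m → Fin N → ℝ) →L[ℝ] ℝ :=
  (ContinuousLinearMap.proj α : (Fin N → ℝ) →L[ℝ] ℝ).comp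
    (ContinuousLinearMap.proj i : (Fin m → Fin N → ℝ) →L[ℝ] (Fin N → ℝ))

lemma diff_comp (γ : (Fin m → ℝ) × (Fin N → ℝ) → Fin m → Fin N → ℝ)
    (hγ : Differentiable ℝ γ) (i : Fin m) (α : Fin N) :
    Differentiable ℝ (fun y => γ y i α) :=
  (evE i α).differentiable.comp hγ

lemma chain_rule (γ : (Fin m → ℝ) × (Fin N → ℝ) → Fin m → Fin N → ℝ)
    (hγ : Differentiable ℝ γ) (σ : (Fin m → ℝ) → Fin N → ℝ)
    (hσ : Differentiable ℝ σ) (x : Fin m → ℝ) (i : Fin m) (α : Fin N) :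
    fderiv ℝ (fun y => γ (y, σ y) i α) x (Pi.single i 1) =
      fderiv ℝ (fun y => γ y i α) (x, σ x) (Pi.single i 1, 0) +
      ∑ β : Fin N, fderiv ℝ σ x (Pi.single i 1) β *
        fderiv ℝ (fun y => γ y i α) (x, σ x) (0, Pi.single β 1) := by
  have hG : Differentiable ℝ (fun y => γ y i α) := diff_comp γ hγ i α
  have hφ : HasFDerivAt (fun y : Fin m → ℝ => ((y, σ y) : (Fin m → ℝ) × (Fin N → ℝ)))
      ((ContinuousLinearMap.id ℝ (Fin m → ℝ)).prod (fderiv ℝ σ x)) x :=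
    HasFDerivAt.prodMk (hasFDerivAt_id x) (hσ x).hasFDerivAt
  have hcomp := ((hG (x, σ x)).hasFDerivAt.comp x hφ)
  have h1 : fderiv ℝ (fun y => γ (y, σ y) i α) x (Pi.single i 1) =
      fderiv ℝ (fun y => γ y i α) (x, σ x)
        (Pi.single i 1, fderiv ℝ σ x (Pi.single i 1)) := by
    rw [show (fun y => γ (y, σ y) i α) = ((fun y => γ y i α) ∘ fun y => (y, σ y)) from rfl,
      hcomp.fderiv]
    rfl
  rw [h1]
  set L := fderiv ℝ (fun y => γ y i α) (x, σ x)
  set w := fderiv ℝ σ x (Pi.single i 1)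
  have hsplit : ((Pi.single i 1 : Fin m → ℝ), w) =
      ((Pi.single i 1 : Fin m → ℝ), (0 : Fin N → ℝ)) + ((0 : Fin m → ℝ), w) := by
    simp
  have hw : ((0 : Fin m → ℝ), w) =
      ∑ β : Fin N, w β • ((0 : Fin m → ℝ), (Pi.single β 1 : Fin N → ℝ)) := by
    ext
    · simp [Prod.fst_sum]
    · simp [Prod.snd_sum, ← Pi.single_smul, Finset.univ_sum_single]
  rw [hsplit, map_add, hw, map_sum]
  congr 1
  refine Finset.sum_congr rfl fun β _ => ?_
  rw [map_smul]
  simp [smul_eq_mul]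

end aux

/-- Hamilton–Jacobi theorem for the locally conformal Hamilton–De Donder–Weyl equations,
in coordinates.  Let `ϑ = ϑ_i(x)dxⁱ` be a closed 1-form on `ℝ^m` and
`γ̄ = ρ d_mx + γⁱ_α du^α∧(∂_i⌟d_mx)` a closed `m`-form on `E = ℝ^m × ℝ^N`
(closedness expressed in coordinates), with the induced connection `h^γ` flat.  Then:
(1) every integral section `σ` of `h^γ` gives a solution `x ↦ (x, σ(x), γ(x,σ(x)))` of the
locally conformal HDW equations, if and only if
(2) `h∘γ` is closed for the Lichnerowicz differential `d_ϑ`, i.e.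
`∑ᵢ ∂γⁱ_α/∂xⁱ + ∂H/∂u^α + (∂H/∂pⁱ_β)·∂γⁱ_β/∂u^α − ϑ_i γⁱ_α = 0` for all `(x,u)`. -/
theorem hamilton_jacobi_lcHDW (m N : ℕ)
    (H : Jb m N → ℝ) (hH : ContDiff ℝ (⊤ : ℕ∞) H)
    (ϑ : (Fin m → ℝ) → Fin m → ℝ) (hϑ : ContDiff ℝ (⊤ : ℕ∞) ϑ)
    -- `ϑ` is closed
    (hϑclosed : ∀ (x : Fin m → ℝ) (i j : Fin m),
      fderiv ℝ (fun y => ϑ y i) x (Pi.single j 1) =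
        fderiv ℝ (fun y => ϑ y j) x (Pi.single i 1))
    (ρ : (Fin m → ℝ) × (Fin N → ℝ) → ℝ) (hρ : ContDiff ℝ (⊤ : ℕ∞) ρ)
    (γ : (Fin m → ℝ) × (Fin N → ℝ) → Fin m → Fin N → ℝ) (hγ : ContDiff ℝ (⊤ : ℕ∞) γ)
    -- closedness of `γ̄`:  `∂ρ/∂u^α = ∑ᵢ ∂γⁱ_α/∂xⁱ`
    (hclosed₁ : ∀ (e : (Fin m → ℝ) × (Fin N → ℝ)) (α : Fin N),
      fderiv ℝ ρ e (0, Pi.single α 1) =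
        ∑ i : Fin m, fderiv ℝ (fun y => γ y i α) e (Pi.single i 1, 0))
    -- closedness of `γ̄`:  `∂γⁱ_α/∂u^β = ∂γⁱ_β/∂u^α`
    (hclosed₂ : ∀ (e : (Fin m → ℝ) × (Fin N → ℝ)) (i : Fin m) (α β : Fin N),
      fderiv ℝ (fun y => γ y i α) e (0, Pi.single β 1) =
        fderiv ℝ (fun y => γ y i β) e (0, Pi.single α 1))
    -- flatness of `h^γ`: an integral section passes through every point of `E`
    (hflat : ∀ (x₀ : Fin m → ℝ) (u₀ : Fin N → ℝ),
      ∃ σ : (Fin m → ℝ) → Fin N → ℝ,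
        ContDiff ℝ (⊤ : ℕ∞) σ ∧ IsIntegralSec m N H γ σ ∧ σ x₀ = u₀) :
    -- (1) every integral section of `h^γ` solves the locally conformal HDW equations
    (∀ σ : (Fin m → ℝ) → Fin N → ℝ, ContDiff ℝ (⊤ : ℕ∞) σ → IsIntegralSec m N H γ σ →
      (∀ (x : Fin m → ℝ) (i : Fin m) (α : Fin N),
        fderiv ℝ σ x (Pi.single i 1) α =
          fderiv ℝ H (gSec m N γ (x, σ x)) (PdirJ m N i α)) ∧
      (∀ (x : Fin m → ℝ) (α : Fin N),
        (∑ i : Fin m, fderiv ℝ (fun y => γ (y, σ y) i α) x (Pi.single i 1)) =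
          -(fderiv ℝ H (gSec m N γ (x, σ x)) (UdirJ m N α)) +
            ∑ i : Fin m, ϑ x i * γ (x, σ x) i α)) ↔
    -- (2) `d_ϑ(h∘γ) = 0`
    (∀ (e : (Fin m → ℝ) × (Fin N → ℝ)) (α : Fin N),
      (∑ i : Fin m, fderiv ℝ (fun y => γ y i α) e (Pi.single i 1, 0)) +
        fderiv ℝ H (gSec m N γ e) (UdirJ m N α) +
        (∑ i : Fin m, ∑ β : Fin N,
          fderiv ℝ H (gSec m N γ e) (PdirJ m N i β) *
            fderiv ℝ (fun y => γ y i β) e (0, Pi.single α 1)) -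
        (∑ i : Fin m, ϑ e.1 i * γ e i α) = 0) := by
  have hγd : Differentiable ℝ γ := hγ.differentiable (by simp)
  -- key computation for an integral section
  have key : ∀ (σ : (Fin m → ℝ) → Fin N → ℝ), ContDiff ℝ (⊤ : ℕ∞) σ →
      IsIntegralSec m N H γ σ → ∀ (x : Fin m → ℝ) (α : Fin N),
      (∑ i : Fin m, fderiv ℝ (fun y => γ (y, σ y) i α) x (Pi.single i 1)) =
        (∑ i : Fin m, fderiv ℝ (fun y => γ y i α) (x, σ x) (Pi.single i 1, 0)) +
        ∑ i : Fin m, ∑ β : Fin N,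
          fderiv ℝ H (gSec m N γ (x, σ x)) (PdirJ m N i β) *
            fderiv ℝ (fun y => γ y i β) (x, σ x) (0, Pi.single α 1) := by
    intro σ hσ hint x α
    rw [← Finset.sum_add_distrib]
    refine Finset.sum_congr rfl fun i _ => ?_
    rw [chain_rule γ hγd σ (hσ.differentiable (by simp)) x i α]
    congr 1
    refine Finset.sum_congr rfl fun β _ => ?_
    rw [hint x i β, hclosed₂ (x, σ x) i α β]
  constructor
  · intro hcond e α
    obtain ⟨σ, hσ, hint, hσx⟩ := hflat e.1 e.2
    have hkey := key σ hσ hint e.1 α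
    have h2 := (hcond σ hσ hint).2 e.1 α
    rw [hσx, Prod.mk.eta] at hkey h2
    linarith
  · intro h2 σ hσ hint
    refine ⟨hint, fun x α => ?_⟩
    have hkey := key σ hσ hint x α
    have h := h2 (x, σ x) α
    simp only at h
    linarith
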